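/- arXiv:2311.01167 — 5 statements merged into one kernel-verified Lean document; each statement's English description precedes it below -/
import Mathlib

section
/- Let ξ > 0 be a real number, θ ∈ [−π/2, 0], r ≥ 0, and set β = r·e^{iθ} ∈ ℂ. Then the two phase constraints −π/4 ≤ arg(ξ + β) ≤ 0 and 0 ≤ arg(ξ − β) ≤ π/4 hold simultaneously if and only if r ≤ ξ / (cos θ − sin θ). -/
open Real Complex

lemma aux_pos (z : ℂ) : (0 ≤ z.arg ∧ z.arg ≤ π/4) ↔ (0 ≤ z.im ∧ z.im ≤ z.re) := by
  have hre := Complex.norm_mul_cos_arg z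
  have him := Complex.norm_mul_sin_arg z
  have habs : (0:ℝ) ≤ ‖z‖ := norm_nonneg z
  constructor
  · rintro ⟨h0, h4⟩
    refine ⟨Complex.arg_nonneg_iff.mp h0, ?_⟩
    have h1 : Real.sin z.arg ≤ Real.sin (π/4) :=
      Real.sin_le_sin_of_le_of_le_pi_div_two (by linarith [Real.pi_pos])
        (by linarith [Real.pi_pos]) h4
    have h2 : Real.cos (π/4) ≤ Real.cos z.arg :=
      Real.cos_le_cos_of_nonneg_of_le_pi h0 (by linarith [Real.pi_pos]) h4
    rw [Real.sin_pi_div_four] at h1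
    rw [Real.cos_pi_div_four] at h2
    nlinarith
  · rintro ⟨him0, hle⟩
    by_cases hz : z = 0
    · simp only [hz, Complex.arg_zero]; constructor <;> linarith [Real.pi_pos]
    have hrepos : 0 < z.re := by
      rcases lt_or_ge 0 z.re with h | h
      · exact h
      · exfalso; exact hz (Complex.ext (le_antisymm h (him0.trans hle))
          (le_antisymm (hle.trans h) him0))
    have h0 : 0 ≤ z.arg := Complex.arg_nonneg_iff.mpr him0
    refine ⟨h0, ?_⟩
    by_contra hlt
    push_neg at hlt
    have hhalf : z.arg < π/2 := Complex.arg_lt_pi_div_two_iff.mpr (Or.inl hrepos)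
    have hpi := Real.pi_pos
    have h1 : Real.sin (π/4) < Real.sin z.arg :=
      Real.strictMonoOn_sin ⟨by linarith, by linarith⟩ ⟨by linarith, hhalf.le⟩ hlt
    have h2 : Real.cos z.arg < Real.cos (π/4) :=
      Real.strictAntiOn_cos ⟨by linarith, by linarith⟩ ⟨by linarith, by linarith⟩ hlt
    rw [Real.sin_pi_div_four] at h1
    rw [Real.cos_pi_div_four] at h2
    have habspos : 0 < ‖z‖ := norm_pos_iff.mpr hz
    nlinarith

lemma aux_neg (z : ℂ) : (-(π/4) ≤ z.arg ∧ z.arg ≤ 0) ↔ (z.im ≤ 0 ∧ -z.im ≤ z.re) := by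
  have hre := Complex.norm_mul_cos_arg z
  have him := Complex.norm_mul_sin_arg z
  have habs : (0:ℝ) ≤ ‖z‖ := norm_nonneg z
  have hpi := Real.pi_pos
  constructor
  · rintro ⟨h0, h4⟩
    have hs0 : Real.sin z.arg ≤ 0 := by
      have := Real.sin_le_sin_of_le_of_le_pi_div_two (x := z.arg) (y := 0)
        (by linarith) (by linarith) h4
      simpa using this
    refine ⟨by nlinarith, ?_⟩
    have h1 : Real.sin (-(π/4)) ≤ Real.sin z.arg :=
      Real.sin_le_sin_of_le_of_le_pi_div_two (by linarith) (by linarith) h0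
    have h2 : Real.cos (π/4) ≤ Real.cos (-z.arg) :=
      Real.cos_le_cos_of_nonneg_of_le_pi (by linarith) (by linarith) (by linarith)
    rw [Real.cos_neg] at h2
    rw [Real.sin_neg, Real.sin_pi_div_four] at h1
    rw [Real.cos_pi_div_four] at h2
    nlinarith
  · rintro ⟨him0, hle⟩
    by_cases hz : z = 0
    · simp only [hz, Complex.arg_zero]; constructor <;> linarith [Real.pi_pos]
    have hrepos : 0 < z.re := by
      rcases lt_or_ge 0 z.re with h | h
      · exact h
      · exfalso
        have h1 : z.im = 0 := le_antisymm him0 (by linarith)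
        have h2 : z.re = 0 := le_antisymm h (by rw [h1] at hle; simpa using hle)
        exact hz (Complex.ext h2 h1)
    have h0 : z.arg ≤ 0 := by
      rcases lt_or_eq_of_le him0 with h | h
      · exact (Complex.arg_neg_iff.mpr h).le
      · exact le_of_eq (Complex.arg_eq_zero_iff.mpr ⟨hrepos.le, h⟩)
    refine ⟨?_, h0⟩
    by_contra hlt
    push_neg at hlt
    have hhalf : -(π/2) < z.arg := Complex.neg_pi_div_two_lt_arg_iff.mpr (Or.inl hrepos)
    have h1 : Real.sin z.arg < Real.sin (-(π/4)) :=
      Real.strictMonoOn_sin ⟨hhalf.le, by linarith⟩ ⟨by linarith, by linarith⟩ hlt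
    have h2 : Real.cos (-z.arg) < Real.cos (π/4) :=
      Real.strictAntiOn_cos ⟨by linarith, by linarith⟩ ⟨by linarith, by linarith⟩ (by linarith)
    rw [Real.cos_neg] at h2
    rw [Real.sin_neg, Real.sin_pi_div_four] at h1
    rw [Real.cos_pi_div_four] at h2
    have habspos : 0 < ‖z‖ := norm_pos_iff.mpr hz
    nlinarith

theorem stmt_1 (ξ θ r : ℝ) (hξ : 0 < ξ) (hθ : θ ∈ Set.Icc (-(π / 2)) 0) (hr : 0 ≤ r) :
    ((-(π / 4) ≤ Complex.arg ((ξ : ℂ) + (r : ℂ) * Complex.exp ((θ : ℂ) * Complex.I)) ∧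
        Complex.arg ((ξ : ℂ) + (r : ℂ) * Complex.exp ((θ : ℂ) * Complex.I)) ≤ 0) ∧
      (0 ≤ Complex.arg ((ξ : ℂ) - (r : ℂ) * Complex.exp ((θ : ℂ) * Complex.I)) ∧
        Complex.arg ((ξ : ℂ) - (r : ℂ) * Complex.exp ((θ : ℂ) * Complex.I)) ≤ π / 4))
      ↔ r ≤ ξ / (Real.cos θ - Real.sin θ) := by
  obtain ⟨hθ1, hθ2⟩ := hθ
  have hpi := Real.pi_pos
  have hs : Real.sin θ ≤ 0 := by
    have := Real.sin_le_sin_of_le_of_le_pi_div_two (x := θ) (y := 0) hθ1 (by linarith) hθ2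
    simpa using this
  have hc : 0 ≤ Real.cos θ := Real.cos_nonneg_of_mem_Icc ⟨hθ1, by linarith⟩
  have hsc : Real.sin θ ^ 2 + Real.cos θ ^ 2 = 1 := Real.sin_sq_add_cos_sq θ
  have hcs : 0 < Real.cos θ - Real.sin θ := by nlinarith
  set z₁ : ℂ := (ξ : ℂ) + (r : ℂ) * Complex.exp ((θ : ℂ) * Complex.I) with hz₁
  set z₂ : ℂ := (ξ : ℂ) - (r : ℂ) * Complex.exp ((θ : ℂ) * Complex.I) with hz₂
  have h1re : z₁.re = ξ + r * Real.cos θ := by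
    simp [hz₁, Complex.add_re, Complex.mul_re, Complex.exp_ofReal_mul_I_re,
      Complex.exp_ofReal_mul_I_im]
  have h1im : z₁.im = r * Real.sin θ := by
    simp [hz₁, Complex.add_im, Complex.mul_im, Complex.exp_ofReal_mul_I_re,
      Complex.exp_ofReal_mul_I_im]
  have h2re : z₂.re = ξ - r * Real.cos θ := by
    simp [hz₂, Complex.sub_re, Complex.mul_re, Complex.exp_ofReal_mul_I_re,
      Complex.exp_ofReal_mul_I_im]
  have h2im : z₂.im = -(r * Real.sin θ) := by
    simp [hz₂, Complex.sub_im, Complex.mul_im, Complex.exp_ofReal_mul_I_re,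
      Complex.exp_ofReal_mul_I_im]
  rw [aux_neg z₁, aux_pos z₂, h1re, h1im, h2re, h2im, le_div_iff₀ hcs]
  constructor
  · rintro ⟨-, -, h⟩
    nlinarith
  · intro h
    refine ⟨⟨by nlinarith, by nlinarith⟩, by nlinarith, by nlinarith⟩
end

section
/- Let γ > 0 and let X and Y be independent real Gaussian random variables, each with mean 0 and variance 1/(2γ). Then the probability that the principal argument of the complex number 1 + X + iY lies in the interval [π/8, 3π/8] equals (1/8)·e^{−γ} + (1/2)·√(γ/π)·∫_{π/8}^{3π/8} e^{−γ·sin²φ}·cos φ·(1 + erf(√γ·cos φ)) dφ. -/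
open Real MeasureTheory ProbabilityTheory Set Filter NNReal

/-- The Gaussian error function. -/
noncomputable def erf (u : ℝ) : ℝ := (2 / Real.sqrt π) * ∫ t in (0:ℝ)..u, Real.exp (-t ^ 2)



lemma erf_hasDerivAt (u : ℝ) :
    HasDerivAt erf (2 / Real.sqrt π * Real.exp (-u ^ 2)) u := by
  have hc : Continuous fun t : ℝ => Real.exp (-t ^ 2) := by continuity
  exact ((hc.integral_hasStrictDerivAt 0 u).hasDerivAt).const_mul (2 / Real.sqrt π)

lemma erf_continuous : Continuous erf :=
  continuous_iff_continuousAt.2 fun u => (erf_hasDerivAt u).continuousAt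

lemma integrableOn_exp_neg_sq : IntegrableOn (fun t : ℝ => Real.exp (-t ^ 2)) (Set.Ioi 0) := by
  have : Integrable (fun t : ℝ => Real.exp (-(1 : ℝ) * t ^ 2)) := integrable_exp_neg_mul_sq one_pos
  simpa using this.integrableOn

lemma erf_tendsto_atTop : Tendsto erf atTop (nhds 1) := by
  have h := intervalIntegral_tendsto_integral_Ioi (μ := volume) 0 integrableOn_exp_neg_sq tendsto_id
  have h2 : (∫ t in Set.Ioi (0:ℝ), Real.exp (-t ^ 2)) = Real.sqrt π / 2 := by
    have := integral_gaussian_Ioi 1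
    simpa using this
  rw [h2] at h
  have htend := h.const_mul (2 / Real.sqrt π)
  have hπ : Real.sqrt π ≠ 0 := by positivity
  have h1 : 2 / Real.sqrt π * (Real.sqrt π / 2) = 1 := by field_simp
  rw [h1] at htend
  exact htend

lemma erf_neg (u : ℝ) : erf (-u) = - erf u := by
  unfold erf
  have h0 := intervalIntegral.integral_comp_neg (a := (0:ℝ)) (b := u) (fun t => Real.exp (-t ^ 2))
  simp only [neg_zero, neg_neg] at h0
  have h0' : (∫ x in (0:ℝ)..u, Real.exp (-x ^ 2)) = ∫ x in (-u)..(0:ℝ), Real.exp (-x ^ 2) := by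
    rw [← h0]; congr 1; funext x; ring_nf
  have h1 : (∫ t in (0:ℝ)..(-u), Real.exp (-t ^ 2)) = - ∫ t in (0:ℝ)..u, Real.exp (-t ^ 2) := by
    rw [intervalIntegral.integral_symm, h0']
  rw [h1]; ring
variable {γ : ℝ}

lemma int_shifted_gauss (hγ : 0 < γ) (c : ℝ) :
    Integrable (fun r : ℝ => Real.exp (-(γ * (r - c) ^ 2))) := by
  have h := (integrable_exp_neg_mul_sq hγ).comp_sub_right c
  simpa [neg_mul] using h

lemma int_shifted_mul_gauss (hγ : 0 < γ) (c : ℝ) :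
    Integrable (fun r : ℝ => (r - c) * Real.exp (-(γ * (r - c) ^ 2))) := by
  have h := (integrable_mul_exp_neg_mul_sq hγ).comp_sub_right c
  simpa [neg_mul] using h

lemma radial_integrable (hγ : 0 < γ) (c : ℝ) :
    Integrable (fun r : ℝ => r * Real.exp (-(γ * (r - c) ^ 2))) := by
  have h := (int_shifted_mul_gauss hγ c).add ((int_shifted_gauss hγ c).const_mul c)
  have : (fun r : ℝ => r * Real.exp (-(γ * (r - c) ^ 2)))
      = fun r : ℝ => (r - c) * Real.exp (-(γ * (r - c) ^ 2)) + c * Real.exp (-(γ * (r - c) ^ 2)) := by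
    funext r; ring
  rw [this]; exact h

lemma tendsto_exp_neg_sq_atTop (hγ : 0 < γ) (c : ℝ) :
    Tendsto (fun r : ℝ => Real.exp (-(γ * (r - c) ^ 2))) atTop (nhds 0) := by
  apply Real.tendsto_exp_atBot.comp
  have h1 : Tendsto (fun r : ℝ => γ * (r - c) ^ 2) atTop atTop := by
    apply Tendsto.const_mul_atTop hγ
    exact (tendsto_pow_atTop (by norm_num)).comp (tendsto_atTop_add_const_right _ _ tendsto_id)
  exact tendsto_neg_atTop_atBot.comp h1

lemma radial_part1 (hγ : 0 < γ) (c : ℝ) :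
    ∫ r in Set.Ioi (0:ℝ), (r - c) * Real.exp (-(γ * (r - c) ^ 2))
      = (2 * γ)⁻¹ * Real.exp (-(γ * c ^ 2)) := by
  have hd : ∀ x ∈ Set.Ici (0:ℝ), HasDerivAt (fun r => -(2 * γ)⁻¹ * Real.exp (-(γ * (r - c) ^ 2)))
      ((x - c) * Real.exp (-(γ * (x - c) ^ 2))) x := by
    intro x _
    have h1 : HasDerivAt (fun r : ℝ => -(γ * (r - c) ^ 2)) (-(γ * (2 * (x - c)))) x := by
      have : HasDerivAt (fun r : ℝ => r - c) 1 x := (hasDerivAt_id x).sub_const c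
      refine (((this.pow 2).const_mul γ).neg).congr_deriv ?_
      simp
    have h2 := (h1.exp).const_mul (-(2 * γ)⁻¹)
    refine h2.congr_deriv ?_
    field_simp
  have htend : Tendsto (fun r => -(2 * γ)⁻¹ * Real.exp (-(γ * (r - c) ^ 2))) atTop (nhds 0) := by
    simpa using (tendsto_exp_neg_sq_atTop hγ c).const_mul (-(2 * γ)⁻¹)
  have h := integral_Ioi_of_hasDerivAt_of_tendsto' hd
    ((int_shifted_mul_gauss hγ c).integrableOn) htend
  rw [h]
  norm_num

lemma radial_part2 (hγ : 0 < γ) (c : ℝ) :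
    ∫ r in Set.Ioi (0:ℝ), Real.exp (-(γ * (r - c) ^ 2))
      = Real.sqrt π / (2 * Real.sqrt γ) * (1 + erf (Real.sqrt γ * c)) := by
  have hγ' : Real.sqrt γ ≠ 0 := by positivity
  have hπ' : Real.sqrt π ≠ 0 := by positivity
  have hd : ∀ x ∈ Set.Ici (0:ℝ),
      HasDerivAt (fun r => Real.sqrt π / (2 * Real.sqrt γ) * erf (Real.sqrt γ * (r - c)))
        (Real.exp (-(γ * (x - c) ^ 2))) x := by
    intro x _
    have h1 : HasDerivAt (fun r : ℝ => Real.sqrt γ * (r - c)) (Real.sqrt γ) x := by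
      simpa using ((hasDerivAt_id x).sub_const c).const_mul (Real.sqrt γ)
    have h2 := ((erf_hasDerivAt (Real.sqrt γ * (x - c))).comp x h1).const_mul
      (Real.sqrt π / (2 * Real.sqrt γ))
    refine h2.congr_deriv ?_
    have hsq : (Real.sqrt γ * (x - c)) ^ 2 = γ * (x - c) ^ 2 := by
      rw [mul_pow, Real.sq_sqrt hγ.le]
    rw [hsq]
    field_simp
  have htend : Tendsto (fun r => Real.sqrt π / (2 * Real.sqrt γ) * erf (Real.sqrt γ * (r - c)))
      atTop (nhds (Real.sqrt π / (2 * Real.sqrt γ) * 1)) := by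
    apply Tendsto.const_mul
    apply erf_tendsto_atTop.comp
    exact (tendsto_atTop_add_const_right _ _ tendsto_id).const_mul_atTop (by positivity)
  have h := integral_Ioi_of_hasDerivAt_of_tendsto' hd
    ((int_shifted_gauss hγ c).integrableOn) htend
  rw [h]
  have hz : Real.sqrt γ * (0 - c) = -(Real.sqrt γ * c) := by ring
  rw [hz, erf_neg]
  ring

lemma radial_val (hγ : 0 < γ) (c : ℝ) :
    ∫ r in Set.Ioi (0:ℝ), r * Real.exp (-(γ * (r - c) ^ 2))
      = (2 * γ)⁻¹ * Real.exp (-(γ * c ^ 2))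
        + c * (Real.sqrt π / (2 * Real.sqrt γ)) * (1 + erf (Real.sqrt γ * c)) := by
  have hsplit : ∀ r : ℝ, r * Real.exp (-(γ * (r - c) ^ 2))
      = (r - c) * Real.exp (-(γ * (r - c) ^ 2)) + c * Real.exp (-(γ * (r - c) ^ 2)) := by
    intro r; ring
  calc ∫ r in Set.Ioi (0:ℝ), r * Real.exp (-(γ * (r - c) ^ 2))
      = ∫ r in Set.Ioi (0:ℝ), ((r - c) * Real.exp (-(γ * (r - c) ^ 2))
          + c * Real.exp (-(γ * (r - c) ^ 2))) := by
        apply setIntegral_congr_fun measurableSet_Ioi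
        intro r _; ring
    _ = (∫ r in Set.Ioi (0:ℝ), (r - c) * Real.exp (-(γ * (r - c) ^ 2)))
          + ∫ r in Set.Ioi (0:ℝ), c * Real.exp (-(γ * (r - c) ^ 2)) := by
        exact integral_add ((int_shifted_mul_gauss hγ c).integrableOn)
          (((int_shifted_gauss hγ c).const_mul c).integrableOn)
    _ = (2 * γ)⁻¹ * Real.exp (-(γ * c ^ 2))
        + c * (Real.sqrt π / (2 * Real.sqrt γ)) * (1 + erf (Real.sqrt γ * c)) := by
        rw [radial_part1 hγ c, integral_const_mul, radial_part2 hγ c]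
        ring
lemma gauss_prod_withDensity (v : ℝ≥0) (hv : v ≠ 0) :
    (gaussianReal 0 v).prod (gaussianReal 0 v) = (volume : Measure (ℝ × ℝ)).withDensity
      (fun p => gaussianPDF 0 v p.1 * gaussianPDF 0 v p.2) := by
  refine Measure.prod_eq fun s t hs ht => ?_
  rw [withDensity_apply _ (hs.prod ht), Measure.volume_eq_prod, ← Measure.prod_restrict,
    lintegral_prod_mul (measurable_gaussianPDF 0 v).aemeasurable
      (measurable_gaussianPDF 0 v).aemeasurable,
    ← gaussianReal_apply 0 hv s, ← gaussianReal_apply 0 hv t]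

lemma pdf_pointwise {γ : ℝ} (hγ : 0 < γ) (x : ℝ) :
    gaussianPDF 0 (1 / (2 * γ)).toNNReal x
      = ENNReal.ofReal (Real.sqrt (γ / π) * Real.exp (-(γ * x ^ 2))) := by
  have hπ : (0:ℝ) < π := Real.pi_pos
  have hc : ((1 / (2 * γ)).toNNReal : ℝ) = 1 / (2 * γ) :=
    Real.coe_toNNReal _ (by positivity)
  unfold gaussianPDF gaussianPDFReal
  congr 1
  rw [hc]
  have h1 : 2 * π * (1 / (2 * γ)) = π / γ := by field_simp
  have h2 : -(x - 0) ^ 2 / (2 * (1 / (2 * γ))) = -(γ * x ^ 2) := by field_simp; ring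
  rw [h1, h2]
  congr 1
  rw [show γ / π = (π / γ)⁻¹ by field_simp, Real.sqrt_inv]

variable {γ : ℝ}

/-- The inner (radial) integral value as a function of the angle. -/
noncomputable def Ifun (γ θ : ℝ) : ℝ :=
  (γ / π) * Real.exp (-(γ * Real.sin θ ^ 2)) *
    ((2 * γ)⁻¹ * Real.exp (-(γ * Real.cos θ ^ 2))
      + Real.cos θ * (Real.sqrt π / (2 * Real.sqrt γ)) * (1 + erf (Real.sqrt γ * Real.cos θ)))

lemma Ifun_continuous (hγ : 0 < γ) : Continuous (Ifun γ) := by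
  unfold Ifun
  have h := erf_continuous
  fun_prop

lemma exp_split (γ c s r : ℝ) :
    r * (γ / π * Real.exp (-(γ * ((r - c) ^ 2 + s ^ 2))))
      = (γ / π * Real.exp (-(γ * s ^ 2))) * (r * Real.exp (-(γ * (r - c) ^ 2))) := by
  have h : Real.exp (-(γ * s ^ 2)) * Real.exp (-(γ * (r - c) ^ 2))
      = Real.exp (-(γ * ((r - c) ^ 2 + s ^ 2))) := by
    rw [← Real.exp_add]; congr 1; ring
  calc r * (γ / π * Real.exp (-(γ * ((r - c) ^ 2 + s ^ 2))))
      = r * (γ / π * (Real.exp (-(γ * s ^ 2)) * Real.exp (-(γ * (r - c) ^ 2)))) := by rw [h]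
    _ = (γ / π * Real.exp (-(γ * s ^ 2))) * (r * Real.exp (-(γ * (r - c) ^ 2))) := by ring

/-- the function to be integrated in polar coordinates -/
noncomputable def Ffun (γ : ℝ) (p : ℝ × ℝ) : ℝ :=
  p.1 * (γ / π * Real.exp (-(γ * ((p.1 - Real.cos p.2) ^ 2 + Real.sin p.2 ^ 2))))

lemma Ffun_radial_integrable (hγ : 0 < γ) (θ : ℝ) :
    Integrable (fun r => Ffun γ (r, θ)) ((volume : Measure ℝ).restrict (Set.Ioi 0)) := by
  have : (fun r => Ffun γ (r, θ))
      = fun r => (γ / π * Real.exp (-(γ * Real.sin θ ^ 2)))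
          * (r * Real.exp (-(γ * (r - Real.cos θ) ^ 2))) := by
    funext r; exact exp_split γ (Real.cos θ) (Real.sin θ) r
  rw [this]
  exact ((radial_integrable hγ (Real.cos θ)).integrableOn).const_mul _

lemma Ffun_radial_value (hγ : 0 < γ) (θ : ℝ) :
    ∫ r in Set.Ioi (0:ℝ), Ffun γ (r, θ) = Ifun γ θ := by
  have : (fun r => Ffun γ (r, θ))
      = fun r => (γ / π * Real.exp (-(γ * Real.sin θ ^ 2)))
          * (r * Real.exp (-(γ * (r - Real.cos θ) ^ 2))) := by
    funext r; exact exp_split γ (Real.cos θ) (Real.sin θ) r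
  rw [this, integral_const_mul, radial_val hγ (Real.cos θ)]
  rfl

lemma Ffun_nonneg (hγ : 0 < γ) {r : ℝ} (hr : 0 ≤ r) (θ : ℝ) : 0 ≤ Ffun γ (r, θ) := by
  unfold Ffun
  have : (0:ℝ) < π := Real.pi_pos
  positivity

lemma Ffun_cont (hγ : 0 < γ) : Continuous (Ffun γ) := by
  unfold Ffun
  fun_prop

lemma Ffun_integrable (hγ : 0 < γ) :
    Integrable (Ffun γ)
      (((volume : Measure ℝ).restrict (Set.Ioi 0)).prod
        ((volume : Measure ℝ).restrict (Set.Icc (π/8) (3*π/8)))) := by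
  rw [integrable_prod_iff' ((Ffun_cont hγ).aestronglyMeasurable)]
  constructor
  · exact Filter.Eventually.of_forall fun θ => Ffun_radial_integrable hγ θ
  · have heq : ∀ θ : ℝ, (∫ r in Set.Ioi (0:ℝ), ‖Ffun γ (r, θ)‖) = Ifun γ θ := by
      intro θ
      rw [← Ffun_radial_value hγ θ]
      apply setIntegral_congr_fun measurableSet_Ioi
      intro r hr
      exact Real.norm_of_nonneg (Ffun_nonneg hγ (le_of_lt hr) θ)
    simp only [heq]
    exact ((Ifun_continuous hγ).integrableOn_Icc)

lemma sqrt_coeff (hγ : 0 < γ) : γ / π * (Real.sqrt π / (2 * Real.sqrt γ)) = 1 / 2 * Real.sqrt (γ / π) := by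
  have hπ : (0:ℝ) < π := Real.pi_pos
  have h1 : Real.sqrt (γ / π) = Real.sqrt γ / Real.sqrt π := Real.sqrt_div hγ.le π
  have h2 : Real.sqrt γ * Real.sqrt γ = γ := Real.mul_self_sqrt hγ.le
  have h3 : Real.sqrt π * Real.sqrt π = π := Real.mul_self_sqrt hπ.le
  have hsγ : Real.sqrt γ ≠ 0 := by positivity
  have hsπ : Real.sqrt π ≠ 0 := by positivity
  rw [h1]
  field_simp
  nlinarith [h2, h3]

lemma Ifun_eq (hγ : 0 < γ) (θ : ℝ) :
    Ifun γ θ = Real.exp (-γ) / (2 * π)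
      + 1 / 2 * Real.sqrt (γ / π) *
        (Real.exp (-γ * Real.sin θ ^ 2) * Real.cos θ * (1 + erf (Real.sqrt γ * Real.cos θ))) := by
  have hπ : (0:ℝ) < π := Real.pi_pos
  unfold Ifun
  rw [mul_add]
  congr 1
  · have hmerge : Real.exp (-(γ * Real.sin θ ^ 2)) * Real.exp (-(γ * Real.cos θ ^ 2))
        = Real.exp (-γ) := by
      rw [← Real.exp_add]
      congr 1
      have h := Real.sin_sq_add_cos_sq θ
      linear_combination -γ * h
    calc γ / π * Real.exp (-(γ * Real.sin θ ^ 2))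
          * ((2 * γ)⁻¹ * Real.exp (-(γ * Real.cos θ ^ 2)))
        = (γ / π * (2 * γ)⁻¹) * (Real.exp (-(γ * Real.sin θ ^ 2))
            * Real.exp (-(γ * Real.cos θ ^ 2))) := by ring
      _ = (γ / π * (2 * γ)⁻¹) * Real.exp (-γ) := by rw [hmerge]
      _ = Real.exp (-γ) / (2 * π) := by field_simp
  · have : -(γ * Real.sin θ ^ 2) = -γ * Real.sin θ ^ 2 := by ring
    rw [this]
    calc γ / π * Real.exp (-γ * Real.sin θ ^ 2)
          * (Real.cos θ * (Real.sqrt π / (2 * Real.sqrt γ)) * (1 + erf (Real.sqrt γ * Real.cos θ)))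
        = (γ / π * (Real.sqrt π / (2 * Real.sqrt γ))) *
            (Real.exp (-γ * Real.sin θ ^ 2) * Real.cos θ
              * (1 + erf (Real.sqrt γ * Real.cos θ))) := by ring
      _ = _ := by rw [sqrt_coeff hγ]

lemma outer_integral (hγ : 0 < γ) :
    ∫ θ in Set.Icc (π/8) (3*π/8), Ifun γ θ
      = 1 / 8 * Real.exp (-γ) + 1 / 2 * Real.sqrt (γ / π) *
          ∫ φ in (π/8:ℝ)..(3*π/8),
            Real.exp (-γ * Real.sin φ ^ 2) * Real.cos φ * (1 + erf (Real.sqrt γ * Real.cos φ)) := by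
  have hπ : (0:ℝ) < π := Real.pi_pos
  have hab : (π/8:ℝ) ≤ 3*π/8 := by linarith
  have hcont : Continuous (fun φ : ℝ =>
      Real.exp (-γ * Real.sin φ ^ 2) * Real.cos φ * (1 + erf (Real.sqrt γ * Real.cos φ))) := by
    have h := erf_continuous
    fun_prop
  rw [MeasureTheory.integral_Icc_eq_integral_Ioc, ← intervalIntegral.integral_of_le hab]
  have h1 : (∫ θ in (π/8:ℝ)..(3*π/8), Ifun γ θ)
      = ∫ θ in (π/8:ℝ)..(3*π/8), (Real.exp (-γ) / (2 * π)
        + 1 / 2 * Real.sqrt (γ / π) *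
          (Real.exp (-γ * Real.sin θ ^ 2) * Real.cos θ
            * (1 + erf (Real.sqrt γ * Real.cos θ)))) := by
    apply intervalIntegral.integral_congr
    intro θ _
    exact Ifun_eq hγ θ
  rw [h1, intervalIntegral.integral_add (intervalIntegrable_const)
    ((hcont.intervalIntegrable _ _).const_mul _), intervalIntegral.integral_const,
    intervalIntegral.integral_const_mul]
  have h2 : (3*π/8 - π/8) • (Real.exp (-γ) / (2 * π)) = 1 / 8 * Real.exp (-γ) := by
    rw [smul_eq_mul]
    field_simp
    ring
  rw [h2]

lemma polar_chain (hγ : 0 < γ) :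
    (∫ p in {p : ℝ × ℝ |
        Complex.arg (1 + (p.1 : ℂ) + Complex.I * (p.2 : ℂ)) ∈ Set.Icc (π/8) (3*π/8)},
      γ / π * Real.exp (-(γ * (p.1 ^ 2 + p.2 ^ 2))))
    = ∫ θ in Set.Icc (π/8) (3*π/8), Ifun γ θ := by
  have hπ : (0:ℝ) < π := Real.pi_pos
  set S : Set (ℝ × ℝ) := {p : ℝ × ℝ |
      Complex.arg (1 + (p.1 : ℂ) + Complex.I * (p.2 : ℂ)) ∈ Set.Icc (π/8) (3*π/8)} with hSdef
  set A : Set (ℝ × ℝ) := {q : ℝ × ℝ |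
      Complex.arg ((q.1 : ℂ) + (q.2 : ℂ) * Complex.I) ∈ Set.Icc (π/8) (3*π/8)} with hAdef
  set f₂ : ℝ × ℝ → ℝ := fun p => γ / π * Real.exp (-(γ * (p.1 ^ 2 + p.2 ^ 2))) with hf₂
  set h : ℝ × ℝ → ℝ := fun q => γ / π * Real.exp (-(γ * ((q.1 - 1) ^ 2 + q.2 ^ 2))) with hh
  have hS : MeasurableSet S := by
    have hm : Measurable fun p : ℝ × ℝ =>
        Complex.arg (1 + (p.1 : ℂ) + Complex.I * (p.2 : ℂ)) := by
      apply Complex.measurable_arg.comp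
      fun_prop
    exact hm measurableSet_Icc
  have hA : MeasurableSet A := by
    have hm : Measurable fun q : ℝ × ℝ =>
        Complex.arg ((q.1 : ℂ) + (q.2 : ℂ) * Complex.I) := by
      apply Complex.measurable_arg.comp
      fun_prop
    exact hm measurableSet_Icc
  have step2 : S.indicator f₂ = fun p => (A.indicator h) (p + ((1:ℝ), (0:ℝ))) := by
    funext p
    have hcoords : p + ((1:ℝ), (0:ℝ)) = (p.1 + 1, p.2) := by
      ext <;> simp
    have hcplx : ((p.1 + 1 : ℝ) : ℂ) + (p.2 : ℂ) * Complex.I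
        = 1 + (p.1 : ℂ) + Complex.I * (p.2 : ℂ) := by push_cast; ring
    have hmem : (p + ((1:ℝ), (0:ℝ))) ∈ A ↔ p ∈ S := by
      rw [hcoords]
      simp only [hAdef, hSdef, Set.mem_setOf_eq, hcplx]
    have hval : h (p + ((1:ℝ), (0:ℝ))) = f₂ p := by
      rw [hcoords]
      simp only [hh, hf₂]
      norm_num
    by_cases hp : p ∈ S
    · rw [Set.indicator_of_mem hp, Set.indicator_of_mem (hmem.mpr hp), hval]
    · rw [Set.indicator_of_notMem hp, Set.indicator_of_notMem (fun hc => hp (hmem.mp hc))]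
  have step5 : ∀ p ∈ polarCoord.target,
      p.1 • (A.indicator h) (polarCoord.symm p)
        = (Set.Ioi (0:ℝ) ×ˢ Set.Icc (π/8) (3*π/8)).indicator (Ffun γ) p := by
    rintro ⟨r, θ⟩ ⟨hr, hθ⟩
    simp only [Set.mem_Ioi] at hr
    have hsymm : polarCoord.symm (r, θ) = (r * Real.cos θ, r * Real.sin θ) := rfl
    have harg : Complex.arg ((r * Real.cos θ : ℝ) + (r * Real.sin θ : ℝ) * Complex.I) = θ := by
      have hc : ((r * Real.cos θ : ℝ) : ℂ) + ((r * Real.sin θ : ℝ) : ℂ) * Complex.I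
          = (r : ℂ) * ((Real.cos θ : ℂ) + (Real.sin θ : ℂ) * Complex.I) := by push_cast; ring
      rw [hc, Complex.arg_real_mul _ hr, Complex.ofReal_cos, Complex.ofReal_sin,
        Complex.arg_cos_add_sin_mul_I ⟨hθ.1, le_of_lt hθ.2⟩]
    have hmem : polarCoord.symm (r, θ) ∈ A ↔ θ ∈ Set.Icc (π/8) (3*π/8) := by
      rw [hsymm]
      simp only [hAdef, Set.mem_setOf_eq]
      rw [harg]
    have hval : r • h (polarCoord.symm (r, θ)) = Ffun γ (r, θ) := by
      rw [hsymm, smul_eq_mul]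
      simp only [hh, Ffun]
      have hexp : (r * Real.cos θ - 1) ^ 2 + (r * Real.sin θ) ^ 2
          = (r - Real.cos θ) ^ 2 + Real.sin θ ^ 2 := by
        linear_combination (r ^ 2 - 1) * Real.sin_sq_add_cos_sq θ
      rw [hexp]
    by_cases hmem2 : θ ∈ Set.Icc (π/8) (3*π/8)
    · rw [Set.indicator_of_mem (hmem.mpr hmem2), hval,
        Set.indicator_of_mem (by exact ⟨hr, hmem2⟩)]
    · rw [Set.indicator_of_notMem (fun hc => hmem2 (hmem.mp hc)), smul_zero,
        Set.indicator_of_notMem (fun hc => hmem2 hc.2)]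
  have hsub : Set.Ioi (0:ℝ) ×ˢ Set.Icc (π/8) (3*π/8) ⊆ polarCoord.target := by
    apply Set.prod_mono_right
    intro θ hθ
    constructor
    · linarith [hθ.1]
    · linarith [hθ.2]
  calc ∫ p in S, f₂ p
      = ∫ p, S.indicator f₂ p := (MeasureTheory.integral_indicator hS).symm
    _ = ∫ p, (A.indicator h) (p + ((1:ℝ), (0:ℝ))) := by rw [step2]
    _ = ∫ p, (A.indicator h) p := integral_add_right_eq_self _ _
    _ = ∫ p in polarCoord.target, p.1 • (A.indicator h) (polarCoord.symm p) :=
        (integral_comp_polarCoord_symm _).symm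
    _ = ∫ p in polarCoord.target,
          (Set.Ioi (0:ℝ) ×ˢ Set.Icc (π/8) (3*π/8)).indicator (Ffun γ) p :=
        setIntegral_congr_fun polarCoord.open_target.measurableSet step5
    _ = ∫ p in polarCoord.target ∩ (Set.Ioi (0:ℝ) ×ˢ Set.Icc (π/8) (3*π/8)), Ffun γ p := by
        rw [setIntegral_indicator (measurableSet_Ioi.prod measurableSet_Icc)]
    _ = ∫ p in Set.Ioi (0:ℝ) ×ˢ Set.Icc (π/8) (3*π/8), Ffun γ p := by
        rw [Set.inter_eq_self_of_subset_right hsub]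
    _ = ∫ p, Ffun γ p ∂(((volume : Measure ℝ).restrict (Set.Ioi 0)).prod
          ((volume : Measure ℝ).restrict (Set.Icc (π/8) (3*π/8)))) := by
        rw [Measure.volume_eq_prod, ← Measure.prod_restrict]
    _ = ∫ θ in Set.Icc (π/8) (3*π/8), ∫ r in Set.Ioi (0:ℝ), Ffun γ (r, θ) :=
        MeasureTheory.integral_prod_symm _ (Ffun_integrable hγ)
    _ = ∫ θ in Set.Icc (π/8) (3*π/8), Ifun γ θ := by
        apply setIntegral_congr_fun measurableSet_Icc
        intro θ _
        exact Ffun_radial_value hγ θ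
theorem stmt_2 {Ω : Type*} [MeasurableSpace Ω] (μ : Measure Ω) [IsProbabilityMeasure μ]
    (γ : ℝ) (hγ : 0 < γ) (X Y : Ω → ℝ)
    (hindep : IndepFun X Y μ)
    (hX : μ.map X = gaussianReal 0 (1 / (2 * γ)).toNNReal)
    (hY : μ.map Y = gaussianReal 0 (1 / (2 * γ)).toNNReal) :
    μ {ω | Complex.arg (1 + (X ω : ℂ) + Complex.I * (Y ω : ℂ)) ∈ Set.Icc (π / 8) (3 * π / 8)}
      = ENNReal.ofReal ((1 / 8) * Real.exp (-γ)
        + (1 / 2) * Real.sqrt (γ / π) *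
          ∫ φ in (π / 8 : ℝ)..(3 * π / 8),
            Real.exp (-γ * Real.sin φ ^ 2) * Real.cos φ *
              (1 + erf (Real.sqrt γ * Real.cos φ))) := by
  have hπ : (0:ℝ) < π := Real.pi_pos
  set v : NNReal := (1 / (2 * γ)).toNNReal with hvdef
  have hv : v ≠ 0 := by
    have : (0:ℝ) < 1 / (2 * γ) := by positivity
    exact (Real.toNNReal_pos.mpr this).ne'
  have hXm : AEMeasurable X μ := by
    by_contra hc
    rw [Measure.map_of_not_aemeasurable hc] at hX
    have h0 := congrArg (fun m : Measure ℝ => m Set.univ) hX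
    simp [measure_univ] at h0
  have hYm : AEMeasurable Y μ := by
    by_contra hc
    rw [Measure.map_of_not_aemeasurable hc] at hY
    have h0 := congrArg (fun m : Measure ℝ => m Set.univ) hY
    simp [measure_univ] at h0
  set S : Set (ℝ × ℝ) := {p : ℝ × ℝ |
      Complex.arg (1 + (p.1 : ℂ) + Complex.I * (p.2 : ℂ)) ∈ Set.Icc (π/8) (3*π/8)} with hSdef
  have hS : MeasurableSet S := by
    have hm : Measurable fun p : ℝ × ℝ =>
        Complex.arg (1 + (p.1 : ℂ) + Complex.I * (p.2 : ℂ)) := by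
      apply Complex.measurable_arg.comp
      fun_prop
    exact hm measurableSet_Icc
  have hmap : μ.map (fun ω => (X ω, Y ω)) = (gaussianReal 0 v).prod (gaussianReal 0 v) := by
    rw [(indepFun_iff_map_prod_eq_prod_map_map hXm hYm).mp hindep, hX, hY]
  set f₂ : ℝ × ℝ → ℝ := fun p => γ / π * Real.exp (-(γ * (p.1 ^ 2 + p.2 ^ 2))) with hf₂
  set g : ℝ → ℝ := fun x => Real.sqrt (γ / π) * Real.exp (-(γ * x ^ 2)) with hg
  have hgint : Integrable g := by
    have h0 : Integrable (fun x : ℝ => Real.exp (-γ * x ^ 2)) := integrable_exp_neg_mul_sq hγ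
    have h1 : Integrable (fun x : ℝ => Real.exp (-(γ * x ^ 2))) := by
      simpa [neg_mul] using h0
    exact h1.const_mul _
  have hprod_eq : (fun z : ℝ × ℝ => g z.1 * g z.2) = f₂ := by
    funext z
    simp only [hg, hf₂]
    have hsq : Real.sqrt (γ / π) * Real.sqrt (γ / π) = γ / π :=
      Real.mul_self_sqrt (by positivity)
    calc Real.sqrt (γ / π) * Real.exp (-(γ * z.1 ^ 2))
          * (Real.sqrt (γ / π) * Real.exp (-(γ * z.2 ^ 2)))
        = (Real.sqrt (γ / π) * Real.sqrt (γ / π))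
            * (Real.exp (-(γ * z.1 ^ 2)) * Real.exp (-(γ * z.2 ^ 2))) := by ring
      _ = γ / π * Real.exp (-(γ * (z.1 ^ 2 + z.2 ^ 2))) := by
          rw [hsq, ← Real.exp_add]
          congr 1
          ring
  have hf₂int : Integrable f₂ := by
    rw [← hprod_eq]
    rw [show (volume : Measure (ℝ × ℝ)) = (volume : Measure ℝ).prod volume from
      Measure.volume_eq_prod ℝ ℝ]
    exact hgint.mul_prod hgint
  have hpdf : ∀ p : ℝ × ℝ, gaussianPDF 0 v p.1 * gaussianPDF 0 v p.2
      = ENNReal.ofReal (f₂ p) := by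
    intro p
    rw [hvdef, pdf_pointwise hγ, pdf_pointwise hγ,
      ← ENNReal.ofReal_mul (by positivity)]
    rw [← hprod_eq]
  calc μ {ω | Complex.arg (1 + (X ω : ℂ) + Complex.I * (Y ω : ℂ))
        ∈ Set.Icc (π / 8) (3 * π / 8)}
      = μ.map (fun ω => (X ω, Y ω)) S :=
        (Measure.map_apply_of_aemeasurable (hXm.prodMk hYm) hS).symm
    _ = ((gaussianReal 0 v).prod (gaussianReal 0 v)) S := by rw [hmap]
    _ = (volume : Measure (ℝ × ℝ)).withDensity
          (fun p => gaussianPDF 0 v p.1 * gaussianPDF 0 v p.2) S := by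
        rw [gauss_prod_withDensity v hv]
    _ = ∫⁻ p in S, gaussianPDF 0 v p.1 * gaussianPDF 0 v p.2 := withDensity_apply _ hS
    _ = ∫⁻ p in S, ENNReal.ofReal (f₂ p) := by
        exact lintegral_congr fun p => hpdf p
    _ = ENNReal.ofReal (∫ p in S, f₂ p) := by
        rw [ofReal_integral_eq_lintegral_ofReal (hf₂int.integrableOn)
          (Filter.Eventually.of_forall fun p => by positivity)]
    _ = ENNReal.ofReal ((1 / 8) * Real.exp (-γ)
        + (1 / 2) * Real.sqrt (γ / π) *
          ∫ φ in (π / 8 : ℝ)..(3 * π / 8),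
            Real.exp (-γ * Real.sin φ ^ 2) * Real.cos φ *
              (1 + erf (Real.sqrt γ * Real.cos φ))) := by
        rw [hSdef]
        rw [polar_chain hγ, outer_integral hγ]
end

section
/- Let α ∈ [0, 1] be real, θ ∈ [−π/2, π/2], r ≥ 0, and set β = r·e^{iθ} ∈ ℂ. Then the two modulus constraints |α + β| ≤ 1 and |α − β| ≤ 1 hold simultaneously if and only if r ≤ √(1 − α²·sin²θ) − α·cos θ. -/
open Real Complex

theorem stmt_3 (α θ r : ℝ) (hα : α ∈ Set.Icc (0 : ℝ) 1) (hθ : θ ∈ Set.Icc (-(π / 2)) (π / 2))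
    (hr : 0 ≤ r) :
    (‖(α : ℂ) + (r : ℂ) * Complex.exp ((θ : ℂ) * Complex.I)‖ ≤ 1 ∧
      ‖(α : ℂ) - (r : ℂ) * Complex.exp ((θ : ℂ) * Complex.I)‖ ≤ 1)
      ↔ r ≤ Real.sqrt (1 - α ^ 2 * Real.sin θ ^ 2) - α * Real.cos θ := by
  obtain ⟨hα0, hα1⟩ := hα
  have hc : 0 ≤ Real.cos θ := Real.cos_nonneg_of_mem_Icc (by simpa using hθ)
  have hpyth : Real.sin θ ^ 2 + Real.cos θ ^ 2 = 1 := Real.sin_sq_add_cos_sq θ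
  set c := Real.cos θ
  set s := Real.sin θ
  have e0 : Complex.exp ((θ : ℂ) * Complex.I) = ((c : ℂ) + (s : ℂ) * Complex.I) := by
    rw [Complex.exp_mul_I, Complex.ofReal_cos, Complex.ofReal_sin]
  have e1 : (α : ℂ) + (r : ℂ) * Complex.exp ((θ : ℂ) * Complex.I)
      = ((α + r * c : ℝ) : ℂ) + ((r * s : ℝ) : ℂ) * Complex.I := by
    rw [e0]; push_cast; ring
  have e2 : (α : ℂ) - (r : ℂ) * Complex.exp ((θ : ℂ) * Complex.I)
      = ((α - r * c : ℝ) : ℂ) + ((-(r * s) : ℝ) : ℂ) * Complex.I := by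
    rw [e0]; push_cast; ring
  rw [e1, e2, Complex.norm_add_mul_I, Complex.norm_add_mul_I]
  have hs2 : 0 ≤ 1 - α ^ 2 * s ^ 2 := by nlinarith [sq_nonneg s, sq_nonneg (α * s)]
  have key : ∀ x : ℝ, 0 ≤ x → (Real.sqrt x ≤ 1 ↔ x ≤ 1) := fun x hx =>
    ⟨fun h => by nlinarith [Real.sq_sqrt hx, Real.sqrt_nonneg x],
     fun h => by
      rw [show (1 : ℝ) = Real.sqrt 1 by simp]
      exact Real.sqrt_le_sqrt h⟩
  rw [key _ (by positivity), key _ (by positivity)]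
  have hrc : 0 ≤ r + α * c := by positivity
  have hsq : r + α * c ≤ Real.sqrt (1 - α ^ 2 * s ^ 2) ↔
      (r + α * c) ^ 2 ≤ 1 - α ^ 2 * s ^ 2 := Real.le_sqrt hrc hs2
  have hid : (α + r * c) ^ 2 + (r * s) ^ 2 = (r + α * c) ^ 2 + α ^ 2 * s ^ 2 := by
    linear_combination (r ^ 2 - α ^ 2) * hpyth
  have hid2 : (α - r * c) ^ 2 + (-(r * s)) ^ 2 = (r - α * c) ^ 2 + α ^ 2 * s ^ 2 := by
    linear_combination (r ^ 2 - α ^ 2) * hpyth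
  have hmono : (r - α * c) ^ 2 ≤ (r + α * c) ^ 2 := by
    nlinarith [mul_nonneg (mul_nonneg hα0 hr) hc]
  constructor
  · rintro ⟨h, -⟩
    have := hsq.mpr (by nlinarith)
    linarith
  · intro h
    have h2 := hsq.mp (by linarith)
    constructor <;> nlinarith
end

section
/- Let ξ > 0 be real and set β = ((√6 − √2)/2)·ξ·e^{−iπ/4} ∈ ℂ. Then 2|β| = √2·|ξ − β| = √2·|ξ − iβ| = (√6 − √2)·ξ. -/
open Real Complex

lemma sq_cancel {a b : ℝ} (ha : 0 ≤ a) (hb : 0 ≤ b) (h : a^2 = b^2) : a = b := by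
  have : Real.sqrt (a^2) = Real.sqrt (b^2) := by rw [h]
  rwa [Real.sqrt_sq ha, Real.sqrt_sq hb] at this

theorem stmt_10 (ξ : ℝ) (hξ : 0 < ξ)
    (β : ℂ)
    (hβ : β = (((Real.sqrt 6 - Real.sqrt 2) / 2 : ℝ) : ℂ) * (ξ : ℂ) *
      Complex.exp ((-(π / 4) : ℝ) * Complex.I)) :
    2 * ‖β‖ = Real.sqrt 2 * ‖(ξ : ℂ) - β‖ ∧
    Real.sqrt 2 * ‖(ξ : ℂ) - β‖ =
      Real.sqrt 2 * ‖(ξ : ℂ) - Complex.I * β‖ ∧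
    Real.sqrt 2 * ‖(ξ : ℂ) - Complex.I * β‖ = (Real.sqrt 6 - Real.sqrt 2) * ξ := by
  have s2 : Real.sqrt 2 ^ 2 = 2 := Real.sq_sqrt (by norm_num)
  have s6 : Real.sqrt 6 ^ 2 = 6 := Real.sq_sqrt (by norm_num)
  have s2n : (0:ℝ) ≤ Real.sqrt 2 := Real.sqrt_nonneg 2
  have s6n : (0:ℝ) ≤ Real.sqrt 6 := Real.sqrt_nonneg 6
  have hle : Real.sqrt 2 ≤ Real.sqrt 6 := Real.sqrt_le_sqrt (by norm_num)
  set c : ℝ := ((Real.sqrt 6 - Real.sqrt 2) / 2) * ξ * (Real.sqrt 2 / 2) with hc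
  have hβ' : β = (c : ℂ) * (1 - Complex.I) := by
    rw [hβ, Complex.exp_mul_I, ← Complex.ofReal_cos, ← Complex.ofReal_sin]
    rw [Real.cos_neg, Real.sin_neg, Real.cos_pi_div_four, Real.sin_pi_div_four]
    rw [hc]
    push_cast
    ring
  have e1 : (‖β‖)^2 = 2 * c^2 := by
    rw [hβ', Complex.sq_norm, Complex.normSq_apply]
    simp
    ring
  have e2 : (‖(ξ : ℂ) - β‖)^2 = (ξ - c)^2 + c^2 := by
    rw [hβ', Complex.sq_norm, Complex.normSq_apply]
    simp
    ring
  have e3 : (‖(ξ : ℂ) - Complex.I * β‖)^2 = (ξ - c)^2 + c^2 := by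
    rw [hβ', Complex.sq_norm, Complex.normSq_apply]
    simp
    ring
  have hA : 0 ≤ 2 * ‖β‖ := by positivity
  have hB : 0 ≤ Real.sqrt 2 * ‖(ξ : ℂ) - β‖ := by positivity
  have hC : 0 ≤ Real.sqrt 2 * ‖(ξ : ℂ) - Complex.I * β‖ := by positivity
  have hD : 0 ≤ (Real.sqrt 6 - Real.sqrt 2) * ξ := by nlinarith
  refine ⟨sq_cancel hA hB ?_, sq_cancel hB hC ?_, sq_cancel hC hD ?_⟩
  · rw [mul_pow, mul_pow, e1, e2, s2, hc]
    linear_combination (ξ^2/4)*(4 + Real.sqrt 2^2 - 2*Real.sqrt 2*Real.sqrt 6) * s2 +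
      (ξ^2/4)*(Real.sqrt 2^2) * s6
  · rw [mul_pow, mul_pow, e2, e3]
  · rw [mul_pow, mul_pow, e3, s2, hc]
    linear_combination (-(ξ^2/4)*(4 + Real.sqrt 2^2 - 2*Real.sqrt 2*Real.sqrt 6) +
      (ξ^2/2)*(Real.sqrt 6 - Real.sqrt 2)^2) * s2 - (ξ^2/4)*(Real.sqrt 2^2) * s6
end

section
/- For every real γ > 0 and every φ ∈ ℝ, ∫₀^∞ (γ·r/π)·e^{−γ·(r² − 2r·cos φ + 1)} dr = (1/(2π))·e^{−γ} + (1/2)·√(γ/π)·e^{−γ·sin²φ}·cos φ·(1 + erf(√γ·cos φ)). -/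
open Real MeasureTheory

theorem stmt_18 (γ φ : ℝ) (hγ : 0 < γ) :
    ∫ r in Set.Ioi (0 : ℝ), (γ * r / π) * Real.exp (-γ * (r ^ 2 - 2 * r * Real.cos φ + 1))
      = (1 / (2 * π)) * Real.exp (-γ)
        + (1 / 2) * Real.sqrt (γ / π) * Real.exp (-γ * Real.sin φ ^ 2) * Real.cos φ *
          (1 + erf (Real.sqrt γ * Real.cos φ)) := by
  set c := Real.cos φ with hc
  set s := Real.sin φ with hs
  have h1 : s ^ 2 + c ^ 2 = 1 := sin_sq_add_cos_sq φ
  set g : ℝ → ℝ := fun t => Real.exp (-γ * t ^ 2) with hgdef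
  have hgcont : Continuous g := by
    apply Real.continuous_exp.comp; continuity
  set G : ℝ → ℝ := fun x => ∫ t in (0:ℝ)..x, g t with hGdef
  have hG : ∀ x : ℝ, HasDerivAt G (g x) x := fun x =>
    intervalIntegral.integral_hasDerivAt_right (hgcont.intervalIntegrable _ _)
      (hgcont.stronglyMeasurableAtFilter _ _) hgcont.continuousAt
  set A := (γ / π) * Real.exp (-γ * s ^ 2) with hA
  set F : ℝ → ℝ := fun r =>
    A * (-Real.exp (-γ * (r - c) ^ 2) / (2 * γ) + c * G (r - c)) with hF
  have hgauss : IntegrableOn g (Set.Ioi (0:ℝ)) :=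
    (integrable_exp_neg_mul_sq hγ).integrableOn
  -- derivative
  have hderiv : ∀ r : ℝ,
      HasDerivAt F ((γ * r / π) * Real.exp (-γ * (r ^ 2 - 2 * r * c + 1))) r := by
    intro r
    have hinner : HasDerivAt (fun r : ℝ => -γ * (r - c) ^ 2) (-γ * (2 * (r - c))) r := by
      have := (((hasDerivAt_id r).sub_const c).pow 2).const_mul (-γ)
      simpa using this
    have hexp : HasDerivAt (fun r : ℝ => Real.exp (-γ * (r - c) ^ 2))
        (Real.exp (-γ * (r - c) ^ 2) * (-γ * (2 * (r - c)))) r := hinner.exp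
    have hGc : HasDerivAt (fun r : ℝ => G (r - c)) (g (r - c)) r := by
      have := (hG (r - c)).comp r ((hasDerivAt_id r).sub_const c)
      simpa [Function.comp_def] using this
    have hFd : HasDerivAt F
        (A * (-(Real.exp (-γ * (r - c) ^ 2) * (-γ * (2 * (r - c)))) / (2 * γ)
          + c * g (r - c))) r :=
      ((hexp.neg.div_const (2 * γ)).add (hGc.const_mul c)).const_mul A
    convert hFd using 1
    have hexpval : Real.exp (-γ * s ^ 2) * Real.exp (-γ * (r - c) ^ 2)
        = Real.exp (-γ * (r ^ 2 - 2 * r * c + 1)) := by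
      rw [← Real.exp_add]; congr 1; linear_combination (-γ) * h1
    simp only [hA, hgdef]
    rw [← hexpval]
    have hπ : (π : ℝ) ≠ 0 := Real.pi_ne_zero
    field_simp
    ring
  -- nonnegativity of the integrand
  have hpos : ∀ x ∈ Set.Ioi (0:ℝ),
      0 ≤ (γ * x / π) * Real.exp (-γ * (x ^ 2 - 2 * x * c + 1)) := by
    intro x hx
    have hx0 : 0 < x := hx
    have hπ : (0:ℝ) < π := Real.pi_pos
    positivity
  -- limit at infinity
  have hlim : Filter.Tendsto F Filter.atTop
      (nhds (A * (-(0:ℝ) / (2 * γ) + c * (Real.sqrt (π / γ) / 2)))) := by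
    have hsub : Filter.Tendsto (fun r : ℝ => r - c) Filter.atTop Filter.atTop := by
      simpa [sub_eq_add_neg] using
        Filter.tendsto_atTop_add_const_right Filter.atTop (-c) Filter.tendsto_id
    have h2 : Filter.Tendsto (fun r : ℝ => G (r - c)) Filter.atTop
        (nhds (∫ t in Set.Ioi (0:ℝ), g t)) :=
      intervalIntegral_tendsto_integral_Ioi 0 hgauss hsub
    have hgval : (∫ t in Set.Ioi (0:ℝ), g t) = Real.sqrt (π / γ) / 2 :=
      integral_gaussian_Ioi γ
    rw [hgval] at h2
    have hsq : Filter.Tendsto (fun r : ℝ => (r - c) ^ 2) Filter.atTop Filter.atTop :=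
      (Filter.tendsto_pow_atTop two_ne_zero).comp hsub
    have h3 : Filter.Tendsto (fun r : ℝ => Real.exp (-γ * (r - c) ^ 2)) Filter.atTop
        (nhds 0) :=
      Real.tendsto_exp_atBot.comp (hsq.const_mul_atTop_of_neg (neg_lt_zero.mpr hγ))
    exact (((h3.neg.div_const (2 * γ)).add (h2.const_mul c)).const_mul A)
  have key := integral_Ioi_of_hasDerivAt_of_nonneg' (fun x _ => hderiv x) hpos hlim
  rw [key]
  -- evaluate F 0 and simplify
  have hGneg : G (0 - c) = -G c := by
    have heven := intervalIntegral.integral_comp_neg (a := (0:ℝ)) (b := c) g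
    simp only [hgdef, neg_sq, neg_zero] at heven
    simp only [hGdef, hgdef, zero_sub]
    rw [intervalIntegral.integral_symm, ← heven]
  -- erf in terms of G
  have hsγ : (0:ℝ) < Real.sqrt γ := Real.sqrt_pos.mpr hγ
  have herf : erf (Real.sqrt γ * c) = (2 / Real.sqrt π) * (Real.sqrt γ * G c) := by
    unfold erf
    congr 1
    have hcomp : (∫ x in (0:ℝ)..c, Real.exp (-(Real.sqrt γ * x) ^ 2))
        = (Real.sqrt γ)⁻¹ • ∫ x in (Real.sqrt γ * 0)..(Real.sqrt γ * c), Real.exp (-x ^ 2) :=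
      intervalIntegral.integral_comp_mul_left (fun y => Real.exp (-y ^ 2)) (ne_of_gt hsγ)
    have hgg : (∫ x in (0:ℝ)..c, Real.exp (-(Real.sqrt γ * x) ^ 2)) = G c := by
      simp only [hGdef, hgdef]
      congr 1; ext x
      rw [mul_pow, Real.sq_sqrt hγ.le]; ring_nf
    rw [hgg] at hcomp
    rw [mul_zero] at hcomp
    rw [eq_comm, smul_eq_mul, inv_mul_eq_iff_eq_mul₀ (ne_of_gt hsγ)] at hcomp
    rw [← hcomp]
  have hπ : (0:ℝ) < π := Real.pi_pos
  have hsπ : (0:ℝ) < Real.sqrt π := Real.sqrt_pos.mpr hπ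
  have hexp2 : Real.exp (-γ) = Real.exp (-γ * s ^ 2) * Real.exp (-γ * c ^ 2) := by
    rw [← Real.exp_add]; congr 1; linear_combination γ * h1
  have hdiv1 : Real.sqrt (π / γ) = Real.sqrt π / Real.sqrt γ := Real.sqrt_div hπ.le γ
  have hdiv2 : Real.sqrt (γ / π) = Real.sqrt γ / Real.sqrt π := Real.sqrt_div hγ.le π
  have ha2 : Real.sqrt γ ^ 2 = γ := Real.sq_sqrt hγ.le
  have hb2 : Real.sqrt π ^ 2 = π := Real.sq_sqrt hπ.le
  have hexpc : Real.exp (-γ * ((0:ℝ) - c) ^ 2) = Real.exp (-γ * c ^ 2) := by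
    congr 1; ring
  simp only [hF, hA]
  rw [hGneg, hexpc, herf, hdiv1, hdiv2, hexp2]
  have h4 : Real.sqrt γ ≠ 0 := ne_of_gt hsγ
  have h5 : Real.sqrt π ≠ 0 := ne_of_gt hsπ
  have key2 : ∀ a b Es Ec Gc : ℝ, a ≠ 0 → b ≠ 0 →
      a ^ 2 / b ^ 2 * Es * (-0 / (2 * a ^ 2) + c * (b / a / 2)) -
        a ^ 2 / b ^ 2 * Es * (-Ec / (2 * a ^ 2) + c * -Gc)
      = 1 / (2 * b ^ 2) * (Es * Ec) + 1 / 2 * (a / b) * Es * c * (1 + 2 / b * (a * Gc)) := by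
    intro a b Es Ec Gc ha hb
    field_simp
    ring
  have hkey := key2 (Real.sqrt γ) (Real.sqrt π) (Real.exp (-γ * s ^ 2))
    (Real.exp (-γ * c ^ 2)) (G c) h4 h5
  rw [ha2, hb2] at hkey
  exact hkey
end
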